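/- For the Weibull model parametrized as f(x|θ,β) = β x^(β−1) θ^(−β) exp(−(x/θ)^β), with prior π(θ,β) ∝ θ^r β^q, and data x₁,…,xₙ > 0 with δᵢ ∈ {0,1}, m = ∑ δᵢ, at least two distinct uncensored observations: the integral ∫₀^∞ ∫₀^∞ θ^(−mβ+r) β^(m+q) (∏ x_i^{δᵢβ}) exp(−∑(x_i/θ)^β) dθ dβ is finite if and only if r = −1 and q > −m. -/

import Mathlib

open MeasureTheory Set Finset

lemma exp_pow_bound {t : ℝ} (ht : 0 ≤ t) (k : ℕ) (hk : k ≠ 0) : (t / k) ^ k ≤ Real.exp t := by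
  have hk' : (0:ℝ) < k := Nat.cast_pos.mpr (Nat.pos_of_ne_zero hk)
  have h1 : t / k ≤ Real.exp (t / k) := by linarith [Real.add_one_le_exp (t / k)]
  calc (t/k)^k ≤ (Real.exp (t/k))^k := pow_le_pow_left₀ (by positivity) h1 k
    _ = Real.exp (k * (t/k)) := by rw [← Real.exp_nat_mul]
    _ = Real.exp t := by rw [mul_div_cancel₀ _ hk'.ne']

lemma inner_nonneg (a b c : ℝ) :
    0 ≤ᵐ[volume.restrict (Ioi (0:ℝ))] fun θ : ℝ => θ ^ a * Real.exp (-(c * θ ^ b)) := by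
  filter_upwards [ae_restrict_mem measurableSet_Ioi] with θ hθ
  have hθ0 : (0:ℝ) < θ := hθ
  positivity

lemma meas_aux (a c b : ℝ) : Measurable fun θ : ℝ => θ ^ a * Real.exp (-(c * θ ^ b)) := by
  fun_prop

/-- Exact value of the inner integral in the case `r = -1`. -/
lemma inner_val {β c : ℝ} (hβ : 0 < β) (hc : 0 < c) (k : ℕ) (hk : 0 < k) :
    IntegrableOn (fun θ : ℝ => θ ^ (-((k : ℝ) * β) + -1) * Real.exp (-(c * θ ^ (-β)))) (Ioi 0)
    ∧ ∫ θ in Ioi (0:ℝ), θ ^ (-((k : ℝ) * β) + -1) * Real.exp (-(c * θ ^ (-β)))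
      = (1/β) * ((1/c) ^ (k : ℝ) * Real.Gamma k) := by
  have hk' : (0:ℝ) < k := Nat.cast_pos.mpr hk
  set f : ℝ → ℝ := fun y => y ^ ((k:ℝ) - 1) * Real.exp (-(c * y)) with hf
  have hf_int : IntegrableOn f (Ioi 0) := by
    have := integrableOn_rpow_mul_exp_neg_mul_rpow (s := (k:ℝ)-1) (p := 1) (b := c)
      (by linarith) one_pos hc
    simpa [hf, Real.rpow_one, neg_mul] using this
  have hfval : ∫ y in Ioi (0:ℝ), f y = (1/c) ^ (k : ℝ) * Real.Gamma k :=
    Real.integral_rpow_mul_exp_neg_mul_Ioi hk' hc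
  have hpt : EqOn (fun θ : ℝ => (|(-β)| * θ ^ ((-β) - 1)) • f (θ ^ (-β)))
      (fun θ : ℝ => β * (θ ^ (-((k:ℝ) * β) + -1) * Real.exp (-(c * θ ^ (-β))))) (Ioi 0) := by
    intro θ hθ
    have hθ0 : (0:ℝ) < θ := hθ
    simp only [hf, smul_eq_mul, abs_neg, abs_of_pos hβ]
    rw [← Real.rpow_mul hθ0.le]
    have h2 : θ ^ (-β - 1) * θ ^ (-β * ((k:ℝ) - 1)) = θ ^ (-((k:ℝ) * β) + -1) := by
      rw [← Real.rpow_add hθ0]; ring_nf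
    rw [← h2]; ring
  have hβn : (-β) ≠ 0 := neg_ne_zero.mpr hβ.ne'
  have hI : IntegrableOn (fun θ : ℝ => (|(-β)| * θ ^ ((-β) - 1)) • f (θ ^ (-β))) (Ioi 0) :=
    (integrableOn_Ioi_comp_rpow_iff f hβn).mpr hf_int
  have hI2 : IntegrableOn
      (fun θ : ℝ => β * (θ ^ (-((k:ℝ) * β) + -1) * Real.exp (-(c * θ ^ (-β))))) (Ioi 0) :=
    hI.congr_fun hpt measurableSet_Ioi
  have hI3 : IntegrableOn
      (fun θ : ℝ => θ ^ (-((k:ℝ) * β) + -1) * Real.exp (-(c * θ ^ (-β)))) (Ioi 0) :=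
    (integrable_const_mul_iff (isUnit_iff_ne_zero.mpr hβ.ne') _).mp hI2
  refine ⟨hI3, ?_⟩
  have hval := integral_comp_rpow_Ioi f hβn
  rw [setIntegral_congr_fun measurableSet_Ioi hpt] at hval
  rw [integral_const_mul, hfval] at hval
  field_simp at hval ⊢
  linarith [hval]

/-- Non-integrability of the inner integrand when the exponent is `≥ -1`. -/
lemma inner_div {a β c : ℝ} (hβ : 0 < β) (ha : -1 ≤ a) :
    ¬ IntegrableOn (fun θ : ℝ => θ ^ a * Real.exp (-(c * θ ^ (-β)))) (Ioi 0) := by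
  intro h
  have h1 : IntegrableOn (fun θ : ℝ => θ ^ a * Real.exp (-(c * θ ^ (-β)))) (Ioi 1) :=
    h.mono (Ioi_subset_Ioi zero_le_one) le_rfl
  have h2 : IntegrableOn (fun θ : ℝ => Real.exp (-|c|) * θ ^ (-1:ℝ)) (Ioi 1) := by
    refine h1.mono' ((measurable_const.mul (by fun_prop : Measurable fun θ:ℝ => θ ^ (-1:ℝ))).aestronglyMeasurable) ?_
    filter_upwards [ae_restrict_mem measurableSet_Ioi] with θ hθ
    have hθ1 : (1:ℝ) ≤ θ := le_of_lt hθ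
    have hθ0 : (0:ℝ) < θ := lt_of_lt_of_le zero_lt_one hθ1
    have hb : θ ^ (-β) ≤ 1 := Real.rpow_le_one_of_one_le_of_nonpos hθ1 (neg_nonpos.mpr hβ.le)
    have hb0 : 0 ≤ θ ^ (-β) := Real.rpow_nonneg hθ0.le _
    have hexp : Real.exp (-|c|) ≤ Real.exp (-(c * θ ^ (-β))) := by
      apply Real.exp_le_exp.mpr
      rw [neg_le_neg_iff]
      calc c * θ ^ (-β) ≤ |c * θ ^ (-β)| := le_abs_self _
        _ = |c| * θ ^ (-β) := by rw [abs_mul, abs_of_nonneg hb0]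
        _ ≤ |c| * 1 := by exact mul_le_mul_of_nonneg_left hb (abs_nonneg c)
        _ = |c| := mul_one _
    have hpow : θ ^ (-1:ℝ) ≤ θ ^ a := Real.rpow_le_rpow_of_exponent_le hθ1 ha
    have : ‖Real.exp (-|c|) * θ ^ (-1:ℝ)‖ = Real.exp (-|c|) * θ ^ (-1:ℝ) := by
      rw [Real.norm_eq_abs, abs_of_nonneg]
      positivity
    rw [this]
    exact mul_le_mul hexp hpow (by positivity) (Real.exp_pos _).le |>.trans_eq (mul_comm _ _)
  have h3 : IntegrableOn (fun θ : ℝ => θ ^ (-1:ℝ)) (Ioi 1) :=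
    (integrable_const_mul_iff (isUnit_iff_ne_zero.mpr (Real.exp_pos _).ne') _).mp h2
  rw [integrableOn_Ioi_rpow_iff zero_lt_one] at h3
  linarith

lemma lint_inv_top : ∫⁻ β in Ioo (0:ℝ) 1, ENNReal.ofReal (β ^ (-1:ℝ)) = ⊤ := by
  by_contra h
  have hmeas : AEStronglyMeasurable (fun β : ℝ => β ^ (-1:ℝ))
      (volume.restrict (Ioo (0:ℝ) 1)) := by fun_prop
  have hnn : 0 ≤ᵐ[volume.restrict (Ioo (0:ℝ) 1)] fun β : ℝ => β ^ (-1:ℝ) := by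
    filter_upwards [ae_restrict_mem measurableSet_Ioo] with β hβ
    exact Real.rpow_nonneg hβ.1.le _
  have h4 : IntegrableOn (fun β : ℝ => β ^ (-1:ℝ)) (Ioo (0:ℝ) 1) :=
    (lintegral_ofReal_ne_top_iff_integrable hmeas hnn).mp h
  rw [intervalIntegral.integrableOn_Ioo_rpow_iff zero_lt_one] at h4
  linarith

/-- If a function dominates `K/β` on `(0,1)`, its integral over `(0,∞)` is infinite. -/
lemma div_aux {f : ℝ → ENNReal} {K : ℝ} (hK : 0 < K)
    (h : ∀ β ∈ Ioo (0:ℝ) 1, ENNReal.ofReal (K * β ^ (-1:ℝ)) ≤ f β) :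
    ∫⁻ β in Ioi (0:ℝ), f β = ⊤ := by
  rw [eq_top_iff]
  calc (⊤:ENNReal) = ENNReal.ofReal K * ⊤ := by
        rw [ENNReal.mul_top (by simpa using (ENNReal.ofReal_pos.mpr hK).ne')]
    _ = ENNReal.ofReal K * ∫⁻ β in Ioo (0:ℝ) 1, ENNReal.ofReal (β ^ (-1:ℝ)) := by
        rw [lint_inv_top]
    _ = ∫⁻ β in Ioo (0:ℝ) 1, ENNReal.ofReal (K * β ^ (-1:ℝ)) := by
        rw [← lintegral_const_mul' _ _ ENNReal.ofReal_ne_top]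
        refine lintegral_congr fun β => ?_
        rw [ENNReal.ofReal_mul hK.le]
    _ ≤ ∫⁻ β in Ioo (0:ℝ) 1, f β := by
        refine lintegral_mono_ae ?_
        filter_upwards [ae_restrict_mem measurableSet_Ioo] with β hβ
        exact h β hβ
    _ ≤ ∫⁻ β in Ioi (0:ℝ), f β := lintegral_mono_set Ioo_subset_Ioi_self

set_option maxHeartbeats 1000000 in
theorem stmt_14 (n : ℕ) (x : Fin n → ℝ) (hx : ∀ i, 0 < x i) (δ : Fin n → ℕ)
    (hδ : ∀ i, δ i = 0 ∨ δ i = 1) (m : ℕ) (hm : m = ∑ i, δ i)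
    (hdist : ∃ i j, i ≠ j ∧ δ i = 1 ∧ δ j = 1 ∧ x i ≠ x j) (r q : ℝ) :
    (∫⁻ β in Ioi (0:ℝ), ∫⁻ θ in Ioi (0:ℝ),
        ENNReal.ofReal (θ ^ (-((m : ℝ) * β) + r) * β ^ ((m : ℝ) + q) *
          (∏ i, x i ^ ((δ i : ℝ) * β)) * Real.exp (-∑ i, (x i / θ) ^ β))) ≠ ⊤ ↔
      r = -1 ∧ -(m : ℝ) < q := by
  obtain ⟨i1, j1, hij1, hdi1, hdj1, hxij1⟩ := hdist
  obtain ⟨i0, j0, hij, hdi, hdj, hxij⟩ :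
      ∃ i j, i ≠ j ∧ δ i = 1 ∧ δ j = 1 ∧ x i < x j := by
    rcases lt_or_gt_of_ne hxij1 with h | h
    · exact ⟨i1, j1, hij1, hdi1, hdj1, h⟩
    · exact ⟨j1, i1, hij1.symm, hdj1, hdi1, h⟩
  have hne : Nonempty (Fin n) := ⟨i0⟩
  set S : ℝ → ℝ := fun β => ∑ i, x i ^ β with hSdef
  set P : ℝ → ℝ := fun β => ∏ i, x i ^ ((δ i : ℝ) * β) with hPdef
  have hSpos : ∀ β, 0 < S β := fun β =>
    Finset.sum_pos (fun i _ => Real.rpow_pos_of_pos (hx i) β) univ_nonempty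
  have hPpos : ∀ β, 0 < P β := fun β =>
    Finset.prod_pos fun i _ => Real.rpow_pos_of_pos (hx i) _
  have hm1 : 0 < m := by
    have h1 : δ i0 ≤ ∑ i, δ i := Finset.single_le_sum (fun i _ => Nat.zero_le _) (mem_univ i0)
    omega
  have hm0 : (0:ℝ) < m := Nat.cast_pos.mpr hm1
  -- the uncensored index set
  set U : Finset (Fin n) := univ.filter (fun k => δ k = 1) with hU
  have hUcard : U.card = m := by
    rw [hm, hU, Finset.card_filter]
    refine (Finset.sum_congr rfl fun i _ => ?_).symm
    rcases hδ i with h | h <;> simp [h]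
  have hPU : ∀ β : ℝ, P β = ∏ k ∈ U, x k ^ β := by
    intro β
    rw [hPdef, hU, Finset.prod_filter]
    refine Finset.prod_congr rfl fun i _ => ?_
    rcases hδ i with h | h <;> simp [h]
  have hiU : i0 ∈ U := by simp [hU, hdi]
  -- key product bound
  have hkey : ∀ β : ℝ, P β * x j0 ^ β ≤ x i0 ^ β * S β ^ m := by
    intro β
    have hterm : ∀ k, x k ^ β ≤ S β := fun k =>
      Finset.single_le_sum (f := fun i => x i ^ β)
        (fun i _ => (Real.rpow_pos_of_pos (hx i) β).le) (mem_univ k)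
    have h1 : ∏ k ∈ U.erase i0, x k ^ β ≤ S β ^ (m - 1) := by
      calc ∏ k ∈ U.erase i0, x k ^ β ≤ ∏ _k ∈ U.erase i0, S β :=
            Finset.prod_le_prod (fun k _ => (Real.rpow_pos_of_pos (hx k) β).le)
              (fun k _ => hterm k)
        _ = S β ^ (m - 1) := by
            rw [Finset.prod_const, Finset.card_erase_of_mem hiU, hUcard]
    have hPsplit : P β = x i0 ^ β * ∏ k ∈ U.erase i0, x k ^ β := by
      rw [hPU β, ← Finset.mul_prod_erase U _ hiU]
    rw [hPsplit]
    have hnn : (0:ℝ) ≤ x i0 ^ β := (Real.rpow_pos_of_pos (hx i0) β).le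
    calc x i0 ^ β * (∏ k ∈ U.erase i0, x k ^ β) * x j0 ^ β
        ≤ x i0 ^ β * S β ^ (m - 1) * S β := by
          apply mul_le_mul (mul_le_mul_of_nonneg_left h1 hnn) (hterm j0)
            (Real.rpow_pos_of_pos (hx j0) β).le
          exact mul_nonneg hnn (pow_nonneg (hSpos β).le _)
      _ = x i0 ^ β * S β ^ m := by
          rw [mul_assoc, ← pow_succ, Nat.sub_add_cancel hm1]

  have hc1 : (0:ℝ) < ∏ i, min (x i) 1 := Finset.prod_pos fun i _ => lt_min (hx i) one_pos
  have hc2 : (0:ℝ) < ∑ i, max (x i) 1 :=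
    Finset.sum_pos (fun i _ => lt_of_lt_of_le one_pos (le_max_right _ _)) univ_nonempty
  have hPl : ∀ β : ℝ, 0 < β → β ≤ 1 → (∏ i, min (x i) 1) ≤ P β := by
    intro β hβ0 hβ1
    rw [hPdef]
    refine Finset.prod_le_prod (fun i _ => (lt_min (hx i) one_pos).le) fun i _ => ?_
    have he0 : (0:ℝ) ≤ (δ i : ℝ) * β := by positivity
    have he1 : (δ i : ℝ) * β ≤ 1 := by
      rcases hδ i with h | h
      · simp [h]
      · simp [h]; linarith
    rcases le_total (x i) 1 with h | h
    · rw [min_eq_left h]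
      calc x i = x i ^ (1:ℝ) := (Real.rpow_one _).symm
        _ ≤ x i ^ ((δ i : ℝ) * β) := Real.rpow_le_rpow_of_exponent_ge (hx i) h he1
    · rw [min_eq_right h]
      exact Real.one_le_rpow h he0
  have hSl : ∀ β : ℝ, 0 ≤ β → β ≤ 1 → S β ≤ ∑ i, max (x i) 1 := by
    intro β hβ0 hβ1
    rw [hSdef]
    refine Finset.sum_le_sum fun i _ => ?_
    rcases le_total (x i) 1 with h | h
    · exact le_trans (Real.rpow_le_one (hx i).le h hβ0) (le_max_right _ _)
    · calc x i ^ β ≤ x i ^ (1:ℝ) := Real.rpow_le_rpow_of_exponent_le h hβ1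
        _ = x i := Real.rpow_one _
        _ ≤ max (x i) 1 := le_max_left _ _
  -- Step 1: rewrite the double integral
  have hmain : (∫⁻ β in Ioi (0:ℝ), ∫⁻ θ in Ioi (0:ℝ),
        ENNReal.ofReal (θ ^ (-((m : ℝ) * β) + r) * β ^ ((m : ℝ) + q) *
          (∏ i, x i ^ ((δ i : ℝ) * β)) * Real.exp (-∑ i, (x i / θ) ^ β)))
      = ∫⁻ β in Ioi (0:ℝ), ENNReal.ofReal (β ^ ((m:ℝ) + q) * P β) *
          ∫⁻ θ in Ioi (0:ℝ),
            ENNReal.ofReal (θ ^ (-((m:ℝ) * β) + r) * Real.exp (-(S β * θ ^ (-β)))) := by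
    refine setLIntegral_congr_fun measurableSet_Ioi (fun β hβ => ?_)
    have hβ0 : (0:ℝ) < β := hβ
    calc (∫⁻ θ in Ioi (0:ℝ),
          ENNReal.ofReal (θ ^ (-((m : ℝ) * β) + r) * β ^ ((m : ℝ) + q) *
            (∏ i, x i ^ ((δ i : ℝ) * β)) * Real.exp (-∑ i, (x i / θ) ^ β)))
        = ∫⁻ θ in Ioi (0:ℝ), ENNReal.ofReal (β ^ ((m:ℝ) + q) * P β) *
            ENNReal.ofReal (θ ^ (-((m:ℝ) * β) + r) * Real.exp (-(S β * θ ^ (-β)))) := by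
          refine setLIntegral_congr_fun measurableSet_Ioi (fun θ hθ => ?_)
          have hθ0 : (0:ℝ) < θ := hθ
          have hsum : ∑ i, (x i / θ) ^ β = S β * θ ^ (-β) := by
            rw [hSdef, Finset.sum_mul]
            refine Finset.sum_congr rfl fun i _ => ?_
            rw [Real.div_rpow (hx i).le hθ0.le, Real.rpow_neg hθ0.le, div_eq_mul_inv]
          rw [hsum, ← ENNReal.ofReal_mul (mul_nonneg (Real.rpow_nonneg hβ0.le _) (hPpos β).le)]
          congr 1
          ring
      _ = _ := lintegral_const_mul' _ _ ENNReal.ofReal_ne_top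
  rw [hmain]
  by_cases hr : r = -1
  · subst hr
    have hval : ∀ β ∈ Ioi (0:ℝ),
        ENNReal.ofReal (β ^ ((m:ℝ) + q) * P β) *
          (∫⁻ θ in Ioi (0:ℝ),
            ENNReal.ofReal (θ ^ (-((m:ℝ) * β) + -1) * Real.exp (-(S β * θ ^ (-β)))))
        = ENNReal.ofReal (Real.Gamma m * (β ^ ((m:ℝ) + q - 1) * (P β / S β ^ m))) := by
      intro β hβ
      have hβ0 : (0:ℝ) < β := hβ
      obtain ⟨hint, hvv⟩ := inner_val hβ0 (hSpos β) m hm1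
      have hI : (∫⁻ θ in Ioi (0:ℝ),
          ENNReal.ofReal (θ ^ (-((m:ℝ) * β) + -1) * Real.exp (-(S β * θ ^ (-β)))))
          = ENNReal.ofReal ((1/β) * ((1/S β) ^ (m:ℝ) * Real.Gamma m)) := by
        rw [← ofReal_integral_eq_lintegral_ofReal hint (inner_nonneg _ _ _), hvv]
      rw [hI, ← ENNReal.ofReal_mul (mul_nonneg (Real.rpow_nonneg hβ0.le _) (hPpos β).le)]
      congr 1
      rw [Real.rpow_natCast (1/S β) m]
      have hb : β ^ ((m:ℝ) + q - 1) = β ^ ((m:ℝ) + q) / β := by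
        rw [show (m:ℝ) + q - 1 = ((m:ℝ) + q) - 1 by ring, Real.rpow_sub hβ0, Real.rpow_one]
      rw [hb, div_pow, one_pow]
      have hS0 := (hSpos β).ne'
      have hSm0 : S β ^ m ≠ 0 := (pow_pos (hSpos β) m).ne'
      field_simp
    rw [setLIntegral_congr_fun measurableSet_Ioi hval]
    by_cases hq : -(m:ℝ) < q
    · -- finite case
      set b : ℝ := Real.log (x j0) - Real.log (x i0) with hbdef
      have hb : 0 < b := sub_pos.mpr (Real.log_lt_log (hx i0) hxij)
      have hint : IntegrableOn
          (fun β : ℝ => Real.Gamma m * (β ^ ((m:ℝ)+q-1) * Real.exp (-(b*β)))) (Ioi 0) := by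
        have h0 := integrableOn_rpow_mul_exp_neg_mul_rpow (s := (m:ℝ)+q-1) (p := 1) (b := b)
          (by linarith) one_pos hb
        have h1 := h0.const_mul (Real.Gamma m)
        simp only [Real.rpow_one, neg_mul] at h1
        exact h1
      have hGpos := Real.Gamma_pos_of_pos hm0
      have hfin : (∫⁻ β in Ioi (0:ℝ),
          ENNReal.ofReal (Real.Gamma m * (β ^ ((m:ℝ)+q-1) * Real.exp (-(b*β))))) ≠ ⊤ := by
        refine (lintegral_ofReal_ne_top_iff_integrable hint.aestronglyMeasurable ?_).mpr hint
        filter_upwards [ae_restrict_mem measurableSet_Ioi] with β hβ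
        have hβ0 : (0:ℝ) < β := hβ
        positivity
      have hle : (∫⁻ β in Ioi (0:ℝ),
            ENNReal.ofReal (Real.Gamma m * (β ^ ((m:ℝ) + q - 1) * (P β / S β ^ m))))
          ≤ ∫⁻ β in Ioi (0:ℝ),
            ENNReal.ofReal (Real.Gamma m * (β ^ ((m:ℝ)+q-1) * Real.exp (-(b*β)))) := by
        refine lintegral_mono_ae ?_
        filter_upwards [ae_restrict_mem measurableSet_Ioi] with β hβ
        have hβ0 : (0:ℝ) < β := hβ
        apply ENNReal.ofReal_le_ofReal
        have hPS : P β / S β ^ m ≤ Real.exp (-(b*β)) := by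
          have hxj : (0:ℝ) < x j0 ^ β := Real.rpow_pos_of_pos (hx j0) β
          have hSm : (0:ℝ) < S β ^ m := pow_pos (hSpos β) m
          rw [div_le_iff₀ hSm]
          have hexp : Real.exp (-(b*β)) = x i0 ^ β / x j0 ^ β := by
            rw [Real.rpow_def_of_pos (hx i0), Real.rpow_def_of_pos (hx j0), ← Real.exp_sub]
            congr 1; rw [hbdef]; ring
          rw [hexp, div_mul_eq_mul_div, le_div_iff₀ hxj]
          exact hkey β
        gcongr
      exact ⟨fun _ => ⟨rfl, hq⟩, fun _ => ne_top_of_le_ne_top hfin hle⟩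
    · -- divergent case
      push_neg at hq
      have hc1 : (0:ℝ) < ∏ i, min (x i) 1 := Finset.prod_pos fun i _ => lt_min (hx i) one_pos
      have hc2 : (0:ℝ) < ∑ i, max (x i) 1 :=
        Finset.sum_pos (fun i _ => lt_of_lt_of_le one_pos (le_max_right _ _)) univ_nonempty
      have hGpos := Real.Gamma_pos_of_pos hm0
      have hK : (0:ℝ) < Real.Gamma m * ((∏ i, min (x i) 1) / (∑ i, max (x i) 1) ^ m) := by
        positivity
      have htop := div_aux hK (f := fun β => ENNReal.ofReal
          (Real.Gamma m * (β ^ ((m:ℝ) + q - 1) * (P β / S β ^ m)))) ?_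
      · exact ⟨fun h => (h htop).elim, fun h => absurd h.2 (not_lt.mpr hq)⟩
      · intro β hβ
        obtain ⟨hβ0, hβ1⟩ := hβ
        apply ENNReal.ofReal_le_ofReal
        have hβinv : β ^ (-1:ℝ) ≤ β ^ ((m:ℝ)+q-1) :=
          Real.rpow_le_rpow_of_exponent_ge hβ0 hβ1.le (by linarith)
        have hc1P : (∏ i, min (x i) 1) ≤ P β := hPl β hβ0 hβ1.le
        have hSc2 : S β ^ m ≤ (∑ i, max (x i) 1) ^ m :=
          pow_le_pow_left₀ (hSpos β).le (hSl β hβ0.le hβ1.le) m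
        have hquot : (∏ i, min (x i) 1) / (∑ i, max (x i) 1) ^ m ≤ P β / S β ^ m :=
          div_le_div₀ (hPpos β).le hc1P (pow_pos (hSpos β) m) hSc2
        calc Real.Gamma m * ((∏ i, min (x i) 1) / (∑ i, max (x i) 1) ^ m) * β ^ (-1:ℝ)
            = Real.Gamma m * (β ^ (-1:ℝ) * ((∏ i, min (x i) 1) / (∑ i, max (x i) 1) ^ m)) := by
              ring
          _ ≤ Real.Gamma m * (β ^ ((m:ℝ)+q-1) * (P β / S β ^ m)) := by
              refine mul_le_mul_of_nonneg_left ?_ hGpos.le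
              refine mul_le_mul hβinv hquot (by positivity) (Real.rpow_nonneg hβ0.le _)
  · -- r ≠ -1 : integral is infinite
    have htop : (∫⁻ β in Ioi (0:ℝ), ENNReal.ofReal (β ^ ((m:ℝ) + q) * P β) *
          ∫⁻ θ in Ioi (0:ℝ),
            ENNReal.ofReal (θ ^ (-((m:ℝ) * β) + r) * Real.exp (-(S β * θ ^ (-β))))) = ⊤ := by
      rcases lt_or_gt_of_ne hr with hlt | hgt
      · -- r < -1
        set c1 : ℝ := ∏ i, min (x i) 1
        set c2 : ℝ := ∑ i, max (x i) 1
        have hc : (0:ℝ) < -(r+1) := by linarith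
        set c : ℝ := -(r+1) with hcdef
        set D : ℝ := Real.exp (-(c2 * Real.exp 1)) * (1 - Real.exp (-(1/2))) with hDdef
        have hD0 : 0 < D := by
          have h1 : Real.exp (-(1/2:ℝ)) < 1 := Real.exp_lt_one_iff.mpr (by norm_num)
          have h2 := Real.exp_pos (-(c2 * Real.exp 1))
          have : (0:ℝ) < 1 - Real.exp (-(1/2)) := by linarith
          positivity
        obtain ⟨k0, hk0⟩ := exists_nat_ge ((m:ℝ) + q + 1)
        set k : ℕ := k0 + 1 with hkdef
        have hk0' : (m:ℝ) + q + 1 ≤ k := by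
          have : (k0:ℝ) ≤ k := by rw [hkdef]; push_cast; linarith
          linarith
        have hkpos : (0:ℝ) < k := by positivity
        have hK : 0 < c1 * D * (c/(2*(k:ℝ)))^k := by positivity
        apply div_aux hK
        rintro β ⟨hβ0, hβ1⟩
        set E : ℝ := Real.exp (c * (1/(2*β)) + 1/(2*β)) * Real.exp (-(c2 * Real.exp 1)) with hEdef
        have hE0 : 0 < E := by positivity
        set b' : ℝ := Real.exp (-(1/(2*β))) with hb'def
        set a' : ℝ := Real.exp (-(1/β)) with ha'def
        have ha0 : 0 < a' := Real.exp_pos _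
        have hab : a' < b' := by
          apply Real.exp_lt_exp.mpr
          rw [neg_lt_neg_iff]
          rw [div_lt_div_iff₀ (by positivity) hβ0]
          linarith
        -- pointwise lower bound on the inner integrand
        have step1 : ∀ θ ∈ Ioo a' b',
            E ≤ θ ^ (-((m:ℝ)*β)+r) * Real.exp (-(S β * θ^(-β))) := by
          intro θ hθ
          have hθ0 : (0:ℝ) < θ := lt_trans ha0 hθ.1
          have hlog1 : -(1/β) < Real.log θ := by
            rw [← Real.log_exp (-(1/β))]
            exact Real.log_lt_log (Real.exp_pos _) hθ.1
          have hlog2 : Real.log θ < -(1/(2*β)) := by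
            rw [← Real.log_exp (-(1/(2*β)))]
            exact Real.log_lt_log hθ0 hθ.2
          have h1 : c * (1/(2*β)) + 1/(2*β) ≤ Real.log θ * (-((m:ℝ)*β)+r) := by
            have e1 : Real.log θ * (-((m:ℝ)*β)+r) = (-Real.log θ) * ((m:ℝ)*β + c + 1) := by
              rw [hcdef]; ring
            rw [e1]
            have h2 : 1/(2*β) ≤ -Real.log θ := by linarith
            have h2' : (0:ℝ) < 1/(2*β) := by positivity
            have h3 : c + 1 ≤ (m:ℝ)*β + c + 1 := by nlinarith
            calc c * (1/(2*β)) + 1/(2*β) = (1/(2*β)) * (c + 1) := by ring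
              _ ≤ (-Real.log θ) * ((m:ℝ)*β + c + 1) :=
                  mul_le_mul h2 h3 (by positivity) (by linarith)
          have h4 : S β * θ^(-β) ≤ c2 * Real.exp 1 := by
            have hS := hSl β hβ0.le hβ1.le
            have hθβ : θ ^ (-β) ≤ Real.exp 1 := by
              rw [Real.rpow_def_of_pos hθ0]
              apply Real.exp_le_exp.mpr
              have h9 : β * (-(1/β)) < β * Real.log θ := mul_lt_mul_of_pos_left hlog1 hβ0
              have h10 : β * (-(1/β)) = -1 := by field_simp
              nlinarith [h9, h10]
            exact mul_le_mul hS hθβ (Real.rpow_nonneg hθ0.le _) hc2.le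
          rw [Real.rpow_def_of_pos hθ0, hEdef]
          exact mul_le_mul (Real.exp_le_exp.mpr h1) (Real.exp_le_exp.mpr (neg_le_neg h4))
            (Real.exp_pos _).le (Real.exp_pos _).le
        -- lower bound for the inner integral
        have hIlow : ENNReal.ofReal (E * (b' - a')) ≤ ∫⁻ θ in Ioi (0:ℝ),
            ENNReal.ofReal (θ ^ (-((m:ℝ) * β) + r) * Real.exp (-(S β * θ ^ (-β)))) := by
          calc ENNReal.ofReal (E * (b' - a'))
              = ENNReal.ofReal E * volume (Ioo a' b') := by
                rw [Real.volume_Ioo, ENNReal.ofReal_mul hE0.le]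
            _ = ∫⁻ _θ in Ioo a' b', ENNReal.ofReal E := (setLIntegral_const _ _).symm
            _ ≤ ∫⁻ θ in Ioo a' b',
                  ENNReal.ofReal (θ ^ (-((m:ℝ) * β) + r) * Real.exp (-(S β * θ ^ (-β)))) := by
                refine lintegral_mono_ae ?_
                filter_upwards [ae_restrict_mem measurableSet_Ioo] with θ hθ
                exact ENNReal.ofReal_le_ofReal (step1 θ hθ)
            _ ≤ _ := lintegral_mono_set fun θ hθ => lt_trans ha0 hθ.1
        refine le_trans ?_ (mul_le_mul_right hIlow _)
        rw [← ENNReal.ofReal_mul (mul_nonneg (Real.rpow_nonneg hβ0.le _) (hPpos β).le)]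
        apply ENNReal.ofReal_le_ofReal
        -- now a purely real inequality
        have hba : b' * (1 - Real.exp (-(1/2:ℝ))) ≤ b' - a' := by
          have ha_eq : a' = b' * b' := by
            rw [ha'def, hb'def, ← Real.exp_add]; congr 1; field_simp; ring
          have hb'le : b' ≤ Real.exp (-(1/2:ℝ)) := by
            apply Real.exp_le_exp.mpr
            rw [neg_le_neg_iff, div_le_div_iff₀ (by norm_num) (by positivity)]
            nlinarith
          nlinarith [Real.exp_pos (-(1/(2*β)))]
        have hEb : Real.exp (c * (1/(2*β))) * D ≤ E * (b' - a') := by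
          have key : Real.exp (c * (1/(2*β)) + 1/(2*β)) * b' = Real.exp (c * (1/(2*β))) := by
            rw [hb'def, ← Real.exp_add]; congr 1; ring
          calc Real.exp (c * (1/(2*β))) * D
              = (Real.exp (c * (1/(2*β)) + 1/(2*β)) * Real.exp (-(c2 * Real.exp 1))) *
                  (b' * (1 - Real.exp (-(1/2:ℝ)))) := by
                rw [hDdef, ← key]; ring
            _ ≤ E * (b' - a') := by
                rw [hEdef]
                exact mul_le_mul_of_nonneg_left hba (by positivity)
        have hc2β : (0:ℝ) ≤ c * (1/(2*β)) := by positivity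
        have hexp_poly : (c/(2*(k:ℝ)))^k * β ^ (-(k:ℝ)) ≤ Real.exp (c * (1/(2*β))) := by
          have h5 := exp_pow_bound hc2β k (by omega)
          have heq : (c * (1/(2*β)) / (k:ℝ))^k = (c/(2*(k:ℝ)))^k * β^(-(k:ℝ)) := by
            rw [Real.rpow_neg hβ0.le, Real.rpow_natCast, ← inv_pow, ← mul_pow]
            congr 1
            field_simp
          rw [heq] at h5
          exact h5
        have hβk : β ^ ((m:ℝ)+q) * β ^ (-(k:ℝ)) = β ^ ((m:ℝ)+q-(k:ℝ)) := by
          rw [← Real.rpow_add hβ0, sub_eq_add_neg]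
        have hβfin : β ^ (-1:ℝ) ≤ β ^ ((m:ℝ)+q-(k:ℝ)) :=
          Real.rpow_le_rpow_of_exponent_ge hβ0 hβ1.le (by linarith)
        have hc1P := hPl β hβ0 hβ1.le
        calc c1 * D * (c/(2*(k:ℝ)))^k * β ^ (-1:ℝ)
            = c1 * ((c/(2*(k:ℝ)))^k * β ^ (-1:ℝ)) * D := by ring
          _ ≤ c1 * ((c/(2*(k:ℝ)))^k * β ^ ((m:ℝ)+q-(k:ℝ))) * D := by
              have : (c/(2*(k:ℝ)))^k * β ^ (-1:ℝ) ≤ (c/(2*(k:ℝ)))^k * β ^ ((m:ℝ)+q-(k:ℝ)) :=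
                mul_le_mul_of_nonneg_left hβfin (by positivity)
              exact mul_le_mul_of_nonneg_right (mul_le_mul_of_nonneg_left this hc1.le) hD0.le
          _ = c1 * (β ^ ((m:ℝ)+q) * ((c/(2*(k:ℝ)))^k * β ^ (-(k:ℝ)))) * D := by
              rw [show β ^ ((m:ℝ)+q) * ((c/(2*(k:ℝ)))^k * β ^ (-(k:ℝ)))
                  = (c/(2*(k:ℝ)))^k * (β ^ ((m:ℝ)+q) * β ^ (-(k:ℝ))) by ring, hβk]
          _ ≤ c1 * (β ^ ((m:ℝ)+q) * Real.exp (c * (1/(2*β)))) * D := by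
              have h6 : β ^ ((m:ℝ)+q) * ((c/(2*(k:ℝ)))^k * β ^ (-(k:ℝ)))
                  ≤ β ^ ((m:ℝ)+q) * Real.exp (c * (1/(2*β))) :=
                mul_le_mul_of_nonneg_left hexp_poly (Real.rpow_nonneg hβ0.le _)
              exact mul_le_mul_of_nonneg_right (mul_le_mul_of_nonneg_left h6 hc1.le) hD0.le
          _ ≤ P β * (β ^ ((m:ℝ)+q) * Real.exp (c * (1/(2*β)))) * D := by
              have h7 : (0:ℝ) ≤ β ^ ((m:ℝ)+q) * Real.exp (c * (1/(2*β))) := by positivity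
              exact mul_le_mul_of_nonneg_right (mul_le_mul_of_nonneg_right hc1P h7) hD0.le
          _ = β ^ ((m:ℝ)+q) * P β * (Real.exp (c * (1/(2*β))) * D) := by ring
          _ ≤ β ^ ((m:ℝ)+q) * P β * (E * (b' - a')) := by
              refine mul_le_mul_of_nonneg_left hEb ?_
              exact mul_nonneg (Real.rpow_nonneg hβ0.le _) (hPpos β).le
      · -- r > -1
        have hd0 : (0:ℝ) < (r+1)/(m:ℝ) := div_pos (by linarith) hm0
        have hO : ∀ β ∈ Ioo (0:ℝ) ((r+1)/(m:ℝ)), (⊤:ENNReal) ≤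
            ENNReal.ofReal (β ^ ((m:ℝ) + q) * P β) *
              ∫⁻ θ in Ioi (0:ℝ),
                ENNReal.ofReal (θ ^ (-((m:ℝ) * β) + r) * Real.exp (-(S β * θ ^ (-β)))) := by
          intro β hβ
          have hβ0 : (0:ℝ) < β := hβ.1
          have ha : (-1:ℝ) ≤ -((m:ℝ)*β) + r := by
            have h2 := hβ.2
            rw [lt_div_iff₀ hm0] at h2
            linarith
          have hIi : (∫⁻ θ in Ioi (0:ℝ),
              ENNReal.ofReal (θ ^ (-((m:ℝ) * β) + r) * Real.exp (-(S β * θ ^ (-β))))) = ⊤ := by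
            by_contra hne2
            exact inner_div hβ0 ha ((lintegral_ofReal_ne_top_iff_integrable
              ((meas_aux _ _ _).aestronglyMeasurable) (inner_nonneg _ _ _)).mp hne2)
          rw [hIi, ENNReal.mul_top
            (ENNReal.ofReal_pos.mpr (mul_pos (Real.rpow_pos_of_pos hβ0 _) (hPpos β))).ne']
        rw [eq_top_iff]
        calc (⊤:ENNReal) = ∫⁻ _β in Ioo (0:ℝ) ((r+1)/(m:ℝ)), (⊤:ENNReal) := by
              rw [setLIntegral_const, Real.volume_Ioo, ENNReal.top_mul (by simp [hd0])]
          _ ≤ ∫⁻ β in Ioo (0:ℝ) ((r+1)/(m:ℝ)), ENNReal.ofReal (β ^ ((m:ℝ) + q) * P β) *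
                ∫⁻ θ in Ioi (0:ℝ),
                  ENNReal.ofReal (θ ^ (-((m:ℝ) * β) + r) * Real.exp (-(S β * θ ^ (-β)))) := by
              refine lintegral_mono_ae ?_
              filter_upwards [ae_restrict_mem measurableSet_Ioo] with β hβ
              exact hO β hβ
          _ ≤ _ := lintegral_mono_set fun y hy => hy.1
    rw [htop]
    simp only [ne_eq, not_true_eq_false, false_iff, not_and]
    intro h; exact absurd h hr
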